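/- Let d ≥ 1, let Σ be a real symmetric positive-definite d×d matrix, A a real symmetric d×d matrix, and m, λ ∈ ℝ^d. Then the complex matrix I − iΣA is invertible, and, with Z = (det(2πΣ))^{−1/2} ∫_{ℝ^d} exp( −(1/2)⟨x−m, Σ^{−1}(x−m)⟩ + (i/2)⟨x, Ax⟩ + i⟨λ, x⟩ ) dx, one has Z² · det(I − iΣA) = exp( i⟨m, A(I − iΣA)^{−1} m⟩ + 2i⟨λ, (I − iΣA)^{−1} m⟩ − ⟨λ, (I − iΣA)^{−1} Σ λ⟩ ). -/

import Mathlib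

open MeasureTheory Matrix Complex
open scoped Matrix Real

noncomputable section

namespace GaussAux

variable {d : ℕ}

lemma integral_comp_mulVec_add (Q : Matrix (Fin d) (Fin d) ℝ) (hQ : Q.det ≠ 0)
    (m : Fin d → ℝ) (f : (Fin d → ℝ) → ℂ) :
    ∫ x : Fin d → ℝ, f x = |Q.det| • ∫ v : Fin d → ℝ, f (m + Q *ᵥ v) := by
  have hinv : Invertible Q := Q.invertibleOfIsUnitDet (Ne.isUnit hQ)
  let e : (Fin d → ℝ) ≃ₗ[ℝ] (Fin d → ℝ) := Q.toLinearEquiv' hinv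
  have hdet : (Matrix.toLin' Q).det = Q.det := LinearMap.det_toLin' Q
  have hmap : Measure.map (Matrix.toLin' Q) volume
      = ENNReal.ofReal |Q.det|⁻¹ • volume := by
    rw [Real.map_linearMap_volume_pi_eq_smul_volume_pi (by rw [hdet]; exact hQ), hdet, abs_inv]
  let eC : (Fin d → ℝ) ≃L[ℝ] (Fin d → ℝ) := e.toContinuousLinearEquiv
  let eM : (Fin d → ℝ) ≃ᵐ (Fin d → ℝ) := eC.toHomeomorph.toMeasurableEquiv
  have hcoe : ∀ v, eM v = Q *ᵥ v := fun v => rfl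
  have h1 : ∫ x, f (m + x) = |Q.det| • ∫ v, f (m + Q *ᵥ v) := by
    have := MeasureTheory.integral_map_equiv (μ := volume) eM (fun x => f (m + x))
    rw [show Measure.map eM volume = Measure.map (Matrix.toLin' Q) volume from rfl, hmap,
      integral_smul_measure] at this
    simp only [hcoe] at this
    rw [← this, ENNReal.toReal_ofReal (by positivity), smul_smul,
      mul_inv_cancel₀ (by simpa using hQ), one_smul]
  rw [← h1, integral_add_left_eq_self]

lemma dot_mulVec_comm {R : Type*} [CommRing R] (M : Matrix (Fin d) (Fin d) R)
    (u v : Fin d → R) : u ⬝ᵥ (M *ᵥ v) = v ⬝ᵥ (Mᵀ *ᵥ u) := by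
  rw [Matrix.dotProduct_mulVec, ← Matrix.mulVec_transpose, dotProduct_comm]

lemma mulVec_dot_mulVec {R : Type*} [CommRing R] (P N : Matrix (Fin d) (Fin d) R)
    (u v : Fin d → R) : (P *ᵥ u) ⬝ᵥ (N *ᵥ (P *ᵥ v)) = u ⬝ᵥ ((Pᵀ * N * P) *ᵥ v) := by
  rw [Matrix.mulVec_mulVec, dotProduct_comm, dot_mulVec_comm, Matrix.mulVec_mulVec,
    ← Matrix.mul_assoc]

def cv (v : Fin d → ℝ) : Fin d → ℂ := fun i => (v i : ℂ)

lemma cast_dot (v w : Fin d → ℝ) : ((v ⬝ᵥ w : ℝ) : ℂ) = cv v ⬝ᵥ cv w := by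
  simp [dotProduct, cv]

lemma cast_mulVec (M : Matrix (Fin d) (Fin d) ℝ) (v : Fin d → ℝ) :
    cv (M *ᵥ v) = M.map Complex.ofReal *ᵥ cv v := by
  funext i; simp [Matrix.mulVec, dotProduct, cv]

lemma cast_add (v w : Fin d → ℝ) : cv (v + w) = cv v + cv w := by
  funext i; simp [cv]

lemma cmap_mul (M N : Matrix (Fin d) (Fin d) ℝ) :
    (M * N).map Complex.ofReal = M.map Complex.ofReal * N.map Complex.ofReal := by
  exact Matrix.map_mul (L := M) (M := N) (f := Complex.ofRealHom)

end GaussAux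

open GaussAux

theorem gaussian_quadratic_identity (d : ℕ) (hd : 1 ≤ d)
    (S A : Matrix (Fin d) (Fin d) ℝ)
    (hS : S.PosDef) (hSsymm : S.IsSymm) (hAsymm : A.IsSymm)
    (m lam : Fin d → ℝ) (Z : ℂ)
    (hZ : Z = ((Real.sqrt ((2 * Real.pi) ^ d * S.det) : ℝ) : ℂ)⁻¹ *
      ∫ x : Fin d → ℝ, Complex.exp (
        ((-(1 / 2) * ((x - m) ⬝ᵥ (S⁻¹ *ᵥ (x - m))) : ℝ) : ℂ)
          + (Complex.I / 2) * ((x ⬝ᵥ (A *ᵥ x) : ℝ) : ℂ)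
          + Complex.I * ((lam ⬝ᵥ x : ℝ) : ℂ))) :
    ((1 : Matrix (Fin d) (Fin d) ℂ) -
        Complex.I • (S.map Complex.ofReal * A.map Complex.ofReal)).det ≠ 0 ∧
    Z ^ 2 * ((1 : Matrix (Fin d) (Fin d) ℂ) -
        Complex.I • (S.map Complex.ofReal * A.map Complex.ofReal)).det
      = Complex.exp (
          Complex.I * ((fun i => (m i : ℂ)) ⬝ᵥ
            ((A.map Complex.ofReal *
              ((1 : Matrix (Fin d) (Fin d) ℂ) -
                Complex.I • (S.map Complex.ofReal * A.map Complex.ofReal))⁻¹) *ᵥ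
              (fun i => (m i : ℂ))))
          + 2 * Complex.I * ((fun i => (lam i : ℂ)) ⬝ᵥ
            (((1 : Matrix (Fin d) (Fin d) ℂ) -
                Complex.I • (S.map Complex.ofReal * A.map Complex.ofReal))⁻¹ *ᵥ
              (fun i => (m i : ℂ))))
          - ((fun i => (lam i : ℂ)) ⬝ᵥ
            ((((1 : Matrix (Fin d) (Fin d) ℂ) -
                Complex.I • (S.map Complex.ofReal * A.map Complex.ofReal))⁻¹ *
              S.map Complex.ofReal) *ᵥ
              (fun i => (lam i : ℂ))))) := by
  -- ## Setup: square root and diagonalization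
  set T : Matrix (Fin d) (Fin d) ℝ := (open scoped MatrixOrder in CFC.sqrt S) with hTdef
  have hTT : T * T = S := (open scoped MatrixOrder in CFC.sqrt_mul_sqrt_self _ hS.posSemidef.nonneg)
  have hTsymm : Tᵀ = T := by
    have := (open scoped MatrixOrder in (CFC.sqrt_nonneg S).posSemidef).1
    rwa [Matrix.IsHermitian, Matrix.conjTranspose_eq_transpose_of_trivial] at this
  have hSdetpos : 0 < S.det := hS.det_pos
  have hTdet : T.det * T.det = S.det := by rw [← Matrix.det_mul, hTT]
  have hTdet0 : T.det ≠ 0 := by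
    intro h; rw [h, zero_mul] at hTdet; exact hSdetpos.ne' hTdet.symm
  set M : Matrix (Fin d) (Fin d) ℝ := T * A * T with hMdef
  have hMh : M.IsHermitian := by
    rw [Matrix.IsHermitian, Matrix.conjTranspose_eq_transpose_of_trivial, hMdef,
      Matrix.transpose_mul, Matrix.transpose_mul, hTsymm, hAsymm.eq, Matrix.mul_assoc]
  set U : Matrix (Fin d) (Fin d) ℝ := (hMh.eigenvectorUnitary : Matrix (Fin d) (Fin d) ℝ)
    with hUdef
  set μ : Fin d → ℝ := hMh.eigenvalues with hμdef
  have hUstar : star U = Uᵀ := by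
    rw [Matrix.star_eq_conjTranspose, Matrix.conjTranspose_eq_transpose_of_trivial]
  have hUtU : Uᵀ * U = 1 := by
    rw [← hUstar]; exact Unitary.coe_star_mul_self hMh.eigenvectorUnitary
  have hUUt : U * Uᵀ = 1 := by
    rw [← hUstar]; exact Unitary.coe_mul_star_self hMh.eigenvectorUnitary
  have hspec : Uᵀ * M * U = Matrix.diagonal μ := by
    rw [← hUstar]
    simpa using hMh.conjStarAlgAut_star_eigenvectorUnitary
  -- ## The real substitution matrix Q
  set Q : Matrix (Fin d) (Fin d) ℝ := T * U with hQdef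
  have hQt : Qᵀ = Uᵀ * T := by rw [hQdef, Matrix.transpose_mul, hTsymm]
  have hF3 : Q * Qᵀ = S := by
    rw [hQdef, hQt, Matrix.mul_assoc, ← Matrix.mul_assoc U, hUUt, Matrix.one_mul, hTT]
  have hF2 : Qᵀ * A * Q = Matrix.diagonal μ := by
    rw [hQdef, hQt, ← hspec, hMdef]
    noncomm_ring
  have hQdet : Q.det * Q.det = S.det := by
    have : Q.det * Qᵀ.det = S.det := by rw [← Matrix.det_mul, hF3]
    rwa [Matrix.det_transpose] at this
  have hQdet0 : Q.det ≠ 0 := by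
    intro h; rw [h, zero_mul] at hQdet; exact hSdetpos.ne' hQdet.symm
  have hF1 : Qᵀ * S⁻¹ * Q = 1 := by
    have hTS : T * S⁻¹ * T = 1 := by
      rw [← hTT, Matrix.mul_inv_rev, ← Matrix.mul_assoc,
        Matrix.mul_nonsing_inv T (Ne.isUnit hTdet0), Matrix.one_mul,
        Matrix.nonsing_inv_mul T (Ne.isUnit hTdet0)]
    rw [hQdef, hQt, Matrix.mul_assoc, Matrix.mul_assoc, ← Matrix.mul_assoc S⁻¹,
      ← Matrix.mul_assoc T, ← Matrix.mul_assoc T, hTS, Matrix.one_mul, hUtU]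
  have hSAQ : S * A * Q = Q * Matrix.diagonal μ := by
    rw [← hF3, ← hF2]; noncomm_ring
  -- ## Complex lifts
  set Sc : Matrix (Fin d) (Fin d) ℂ := S.map Complex.ofReal with hScdef
  set Ac : Matrix (Fin d) (Fin d) ℂ := A.map Complex.ofReal with hAcdef
  set Qc : Matrix (Fin d) (Fin d) ℂ := Q.map Complex.ofReal with hQcdef
  set Qct : Matrix (Fin d) (Fin d) ℂ := Qᵀ.map Complex.ofReal with hQctdef
  set B : Matrix (Fin d) (Fin d) ℂ := 1 - Complex.I • (Sc * Ac) with hBdef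
  have hQctt : Qcᵀ = Qct := by
    rw [hQcdef, hQctdef, Matrix.transpose_map]
  have hAct : Acᵀ = Ac := by
    rw [hAcdef, ← Matrix.transpose_map, hAsymm.eq]
  set Dc : Matrix (Fin d) (Fin d) ℂ :=
    Matrix.diagonal (fun k => 1 - Complex.I * (μ k : ℂ)) with hDcdef
  set D' : Matrix (Fin d) (Fin d) ℂ :=
    Matrix.diagonal (fun k => (1 - Complex.I * (μ k : ℂ))⁻¹) with hD'def
  have hfac0 : ∀ k, (1 : ℂ) - Complex.I * (μ k : ℂ) ≠ 0 := by
    intro k h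
    have := congrArg Complex.re h
    simp [Complex.sub_re, Complex.mul_re] at this
  have hDD' : Dc * D' = 1 := by
    rw [hDcdef, hD'def, Matrix.diagonal_mul_diagonal, ← Matrix.diagonal_one]
    exact congrArg Matrix.diagonal (funext fun k => mul_inv_cancel₀ (hfac0 k))
  have hQc_det : Qc.det = (Q.det : ℂ) := by
    rw [hQcdef]; exact (RingHom.map_det Complex.ofRealHom Q).symm
  have hQcdet0 : Qc.det ≠ 0 := by
    rw [hQc_det]; exact_mod_cast hQdet0
  have hmapSAQ : Sc * Ac * Qc = Qc * Matrix.diagonal (fun k => (μ k : ℂ)) := by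
    rw [hScdef, hAcdef, hQcdef, ← cmap_mul, ← cmap_mul, hSAQ, cmap_mul]
    congr 1
    exact Matrix.diagonal_map (by simp)
  have hDc1 : Dc = 1 - Complex.I • Matrix.diagonal (fun k => (μ k : ℂ)) := by
    rw [hDcdef]
    ext i j
    by_cases h : i = j <;>
      simp [Matrix.diagonal, h, Matrix.one_apply, Matrix.smul_apply, Matrix.sub_apply]
  have hBQ : B * Qc = Qc * Dc := by
    rw [hBdef, hDc1, Matrix.sub_mul, Matrix.one_mul, Matrix.smul_mul, hmapSAQ,
      Matrix.mul_sub, Matrix.mul_one, Matrix.mul_smul]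
  have hdetB : B.det = ∏ k, (1 - Complex.I * (μ k : ℂ)) := by
    have h := congrArg Matrix.det hBQ
    rw [Matrix.det_mul, Matrix.det_mul, mul_comm] at h
    have h2 := mul_left_cancel₀ hQcdet0 h
    rw [h2, hDcdef, Matrix.det_diagonal]
  have hdetB0 : B.det ≠ 0 := by
    rw [hdetB]; exact Finset.prod_ne_zero_iff.mpr (fun k _ => hfac0 k)
  have hQcQct : Qc * Qct = Sc := by
    rw [hQcdef, hQctdef, hScdef, ← cmap_mul, hF3]
  set G : Matrix (Fin d) (Fin d) ℂ := Qc * D' * Qct with hGdef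
  have hBG : B * G = Sc := by
    rw [hGdef, ← Matrix.mul_assoc, ← Matrix.mul_assoc, hBQ, Matrix.mul_assoc _ Dc D',
      hDD', Matrix.mul_one, hQcQct]
  have hBinv : Invertible B := B.invertibleOfIsUnitDet (Ne.isUnit hdetB0)
  have hG : B⁻¹ * Sc = G := by
    rw [← hBG, Matrix.inv_mul_cancel_left_of_invertible]
  have hGsymm : Gᵀ = G := by
    rw [hGdef, Matrix.transpose_mul, Matrix.transpose_mul, ← hQctt,
      Matrix.transpose_transpose, hD'def, Matrix.diagonal_transpose, Matrix.mul_assoc, hQctt]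
  have hNfact : B⁻¹ = 1 + Complex.I • (G * Ac) := by
    have h := Matrix.nonsing_inv_mul B (Ne.isUnit hdetB0)
    rw [hBdef] at h
    rw [Matrix.mul_sub, Matrix.mul_one, Matrix.mul_smul, ← Matrix.mul_assoc, ← hBdef] at h
    rw [hG] at h
    have h2 := sub_eq_iff_eq_add.mp h
    exact h2
  -- ## Integral computation
  set wA : Fin d → ℝ := Qᵀ *ᵥ (A *ᵥ m) with hwAdef
  set wL : Fin d → ℝ := Qᵀ *ᵥ lam with hwLdef
  set wR : Fin d → ℝ := Qᵀ *ᵥ (A *ᵥ m + lam) with hwRdef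
  have hwR : wR = wA + wL := by rw [hwRdef, hwAdef, hwLdef, Matrix.mulVec_add]
  set b : Fin d → ℂ := fun k => (1 - Complex.I * (μ k : ℂ)) / 2 with hbdef
  set c : Fin d → ℂ := fun k => Complex.I * (wR k : ℂ) with hcdef
  have hb0 : ∀ k, b k ≠ 0 := by
    intro k h
    rw [hbdef] at h
    exact hfac0 k (by simpa [div_eq_zero_iff] using h)
  have hb : ∀ k, 0 < (b k).re := by
    intro k
    have : (b k).re = 1 / 2 := by
      simp [hbdef, Complex.div_re, Complex.sub_re, Complex.mul_re, Complex.normSq]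
    rw [this]; norm_num
  set e1 : ℝ := m ⬝ᵥ (A *ᵥ m) with he1def
  set e2 : ℝ := lam ⬝ᵥ m with he2def
  set K : ℂ := Complex.I / 2 * (e1 : ℂ) + Complex.I * (e2 : ℂ) with hKdef
  have hpoint : ∀ v : Fin d → ℝ,
      ((-(1 / 2) * ((m + Q *ᵥ v - m) ⬝ᵥ (S⁻¹ *ᵥ (m + Q *ᵥ v - m))) : ℝ) : ℂ)
        + Complex.I / 2 * (((m + Q *ᵥ v) ⬝ᵥ (A *ᵥ (m + Q *ᵥ v)) : ℝ) : ℂ)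
        + Complex.I * ((lam ⬝ᵥ (m + Q *ᵥ v) : ℝ) : ℂ)
      = K + (-(∑ k, b k * (v k : ℂ) ^ 2) + ∑ k, c k * (v k : ℂ)) := by
    intro v
    have hr1 : m + Q *ᵥ v - m = Q *ᵥ v := add_sub_cancel_left m _
    have hr2 : (Q *ᵥ v) ⬝ᵥ (S⁻¹ *ᵥ (Q *ᵥ v)) = ∑ k, (v k) ^ 2 := by
      rw [mulVec_dot_mulVec, hF1, Matrix.one_mulVec]
      simp [dotProduct, sq]
    have hcross : (Q *ᵥ v) ⬝ᵥ (A *ᵥ m) = ∑ k, wA k * v k := by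
      rw [dotProduct_comm, dot_mulVec_comm, dotProduct_comm, ← hwAdef]
      rfl
    have hr3 : (m + Q *ᵥ v) ⬝ᵥ (A *ᵥ (m + Q *ᵥ v))
        = e1 + 2 * (∑ k, wA k * v k) + ∑ k, μ k * (v k) ^ 2 := by
      rw [Matrix.mulVec_add, dotProduct_add, add_dotProduct,
        add_dotProduct]
      have h2 : m ⬝ᵥ (A *ᵥ (Q *ᵥ v)) = ∑ k, wA k * v k := by
        rw [dot_mulVec_comm, hAsymm.eq, hcross]
      have h4 : (Q *ᵥ v) ⬝ᵥ (A *ᵥ (Q *ᵥ v)) = ∑ k, μ k * (v k) ^ 2 := by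
        rw [mulVec_dot_mulVec, hF2]
        simp only [dotProduct, Matrix.mulVec_diagonal]
        exact Finset.sum_congr rfl fun k _ => by ring
      rw [h2, h4, hcross, ← he1def]; ring
    have hr4 : lam ⬝ᵥ (m + Q *ᵥ v) = e2 + ∑ k, wL k * v k := by
      rw [dotProduct_add, ← he2def]
      congr 1
      rw [dot_mulVec_comm, dotProduct_comm, ← hwLdef]
      rfl
    rw [hr1, hr2, hr3, hr4]
    have hbsum : ∑ k, b k * (v k : ℂ) ^ 2
        = (1 / 2) * (∑ k, ((v k : ℂ)) ^ 2)
          - Complex.I / 2 * (∑ k, ((μ k : ℂ)) * (v k : ℂ) ^ 2) := by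
      rw [Finset.mul_sum, Finset.mul_sum, ← Finset.sum_sub_distrib]
      exact Finset.sum_congr rfl fun k _ => by rw [hbdef]; ring
    have hcsum : ∑ k, c k * (v k : ℂ)
        = Complex.I * ((∑ k, ((wA k : ℂ)) * (v k : ℂ))
            + ∑ k, ((wL k : ℂ)) * (v k : ℂ)) := by
      rw [← Finset.sum_add_distrib, Finset.mul_sum]
      refine Finset.sum_congr rfl fun k _ => ?_
      rw [hcdef, hwR]
      push_cast [Pi.add_apply]
      ring
    rw [hbsum, hcsum, hKdef]
    push_cast
    ring
  set PP : ℂ := ∏ k, (↑Real.pi / b k) ^ (1 / 2 : ℂ) * Complex.exp (c k ^ 2 / (4 * b k))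
    with hPPdef
  have hInt : (∫ x : Fin d → ℝ, Complex.exp (
        ((-(1 / 2) * ((x - m) ⬝ᵥ (S⁻¹ *ᵥ (x - m))) : ℝ) : ℂ)
          + Complex.I / 2 * ((x ⬝ᵥ (A *ᵥ x) : ℝ) : ℂ)
          + Complex.I * ((lam ⬝ᵥ x : ℝ) : ℂ)))
      = |Q.det| • (Complex.exp K * PP) := by
    rw [integral_comp_mulVec_add Q hQdet0 m]
    congr 1
    have hfun : (fun v : Fin d → ℝ => Complex.exp (
        ((-(1 / 2) * ((m + Q *ᵥ v - m) ⬝ᵥ (S⁻¹ *ᵥ (m + Q *ᵥ v - m))) : ℝ) : ℂ)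
          + Complex.I / 2 * (((m + Q *ᵥ v) ⬝ᵥ (A *ᵥ (m + Q *ᵥ v)) : ℝ) : ℂ)
          + Complex.I * ((lam ⬝ᵥ (m + Q *ᵥ v) : ℝ) : ℂ)))
        = fun v => Complex.exp K * Complex.exp
            (-(∑ k, b k * (v k : ℂ) ^ 2) + ∑ k, c k * (v k : ℂ)) :=
      funext fun v => by rw [hpoint v, Complex.exp_add]
    rw [hfun, MeasureTheory.integral_const_mul, GaussianFourier.integral_cexp_neg_sum_mul_add hb c, hPPdef]
  refine ⟨hdetB0, ?_⟩
  rw [hInt] at hZ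
  -- ## Squaring
  have hpi0 : (Real.pi : ℂ) ≠ 0 := by exact_mod_cast Real.pi_ne_zero
  have hPP2 : PP * PP = ((2 * Real.pi : ℝ) : ℂ) ^ d * (B.det)⁻¹
      * Complex.exp (∑ k, c k ^ 2 / (2 * b k)) := by
    rw [hPPdef, ← Finset.prod_mul_distrib]
    have hterm : ∀ k : Fin d,
        ((↑Real.pi / b k) ^ (1 / 2 : ℂ) * Complex.exp (c k ^ 2 / (4 * b k)))
          * ((↑Real.pi / b k) ^ (1 / 2 : ℂ) * Complex.exp (c k ^ 2 / (4 * b k)))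
        = ((2 * Real.pi : ℝ) : ℂ) * (1 - Complex.I * (μ k : ℂ))⁻¹
            * Complex.exp (c k ^ 2 / (2 * b k)) := by
      intro k
      have hx : (↑Real.pi / b k : ℂ) ≠ 0 := div_ne_zero hpi0 (hb0 k)
      have hsq : ((↑Real.pi / b k : ℂ) ^ (1 / 2 : ℂ)) * ((↑Real.pi / b k) ^ (1 / 2 : ℂ))
          = ↑Real.pi / b k := by
        rw [← Complex.cpow_add _ _ hx]
        norm_num
      have hdiv : (↑Real.pi / b k : ℂ)
          = ((2 * Real.pi : ℝ) : ℂ) * (1 - Complex.I * (μ k : ℂ))⁻¹ := by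
        rw [hbdef]
        push_cast
        rw [div_div_eq_mul_div, div_eq_mul_inv]
        ring_nf
      have hexp : Complex.exp (c k ^ 2 / (4 * b k)) * Complex.exp (c k ^ 2 / (4 * b k))
          = Complex.exp (c k ^ 2 / (2 * b k)) := by
        rw [← Complex.exp_add]
        congr 1
        have h4 : (4 : ℂ) * b k ≠ 0 := by
          simp only [ne_eq, mul_eq_zero]
          push_neg
          exact ⟨by norm_num, hb0 k⟩
        have h2 : (2 : ℂ) * b k ≠ 0 := by
          simp only [ne_eq, mul_eq_zero]
          push_neg
          exact ⟨by norm_num, hb0 k⟩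
        field_simp
        ring
      rw [mul_mul_mul_comm, hsq, hexp, hdiv]
    rw [Finset.prod_congr rfl (fun k _ => hterm k), Finset.prod_mul_distrib,
      Finset.prod_mul_distrib, Finset.prod_const, Finset.prod_inv_distrib, ← hdetB,
      ← Complex.exp_sum, Finset.card_univ, Fintype.card_fin]
  have hr0 : (0 : ℝ) ≤ (2 * Real.pi) ^ d * S.det := by positivity
  have hrr : ((Real.sqrt ((2 * Real.pi) ^ d * S.det) : ℝ) : ℂ)
        * ((Real.sqrt ((2 * Real.pi) ^ d * S.det) : ℝ) : ℂ)
      = ((2 * Real.pi : ℝ) : ℂ) ^ d * (S.det : ℂ) := by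
    rw [← Complex.ofReal_mul, Real.mul_self_sqrt hr0]
    push_cast
    ring
  have habs2 : ((|Q.det| : ℝ) : ℂ) * ((|Q.det| : ℝ) : ℂ) = (S.det : ℂ) := by
    rw [← Complex.ofReal_mul, abs_mul_abs_self, hQdet]
  have hsd0 : (S.det : ℂ) ≠ 0 := by exact_mod_cast hSdetpos.ne'
  have h2pi0 : ((2 * Real.pi : ℝ) : ℂ) ≠ 0 := by
    have : (2 : ℝ) * Real.pi ≠ 0 := by positivity
    exact_mod_cast this
  have h2pid : ((2 * Real.pi : ℝ) : ℂ) ^ d ≠ 0 := pow_ne_zero _ h2pi0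
  have hsqrt0 : ((Real.sqrt ((2 * Real.pi) ^ d * S.det) : ℝ) : ℂ) ≠ 0 := by
    intro h
    rw [h, mul_zero] at hrr
    exact (mul_ne_zero h2pid hsd0) hrr.symm
  have hmain : Z ^ 2 * B.det = Complex.exp (K + K + ∑ k, c k ^ 2 / (2 * b k)) := by
    have step1 : Z ^ 2 * B.det
        = ((((Real.sqrt ((2 * Real.pi) ^ d * S.det) : ℝ) : ℂ)
              * ((Real.sqrt ((2 * Real.pi) ^ d * S.det) : ℝ) : ℂ))⁻¹
            * ((((|Q.det| : ℝ) : ℂ) * ((|Q.det| : ℝ) : ℂ))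
              * ((Complex.exp K * Complex.exp K) * (PP * PP)))) * B.det := by
      rw [hZ, Complex.real_smul]
      ring
    rw [step1, hrr, habs2, hPP2, ← Complex.exp_add, Complex.exp_add (K + K)]
    field_simp [hdetB0]
  -- ## Final exponent identity
  set mc : Fin d → ℂ := fun i => (m i : ℂ) with hmcdef
  set lamc : Fin d → ℂ := fun i => (lam i : ℂ) with hlamcdef
  set bc : Fin d → ℂ := Ac *ᵥ mc + lamc with hbcdef
  have hcvm : cv m = mc := rfl
  have hcvlam : cv lam = lamc := rfl
  have hwRc : cv wR = Qct *ᵥ bc := by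
    rw [hwRdef, cast_mulVec, cast_add, cast_mulVec, hcvm, hcvlam, ← hQctdef, ← hAcdef,
      ← hbcdef]
  have hQctT : Qctᵀ = Qc := by rw [← hQctt, Matrix.transpose_transpose]
  have hdG : cv wR ⬝ᵥ (D' *ᵥ cv wR) = bc ⬝ᵥ (G *ᵥ bc) := by
    rw [hwRc, mulVec_dot_mulVec, hQctT, ← hGdef]
  have hd1 : cv wR ⬝ᵥ (D' *ᵥ cv wR)
      = ∑ k, ((wR k : ℂ)) ^ 2 * (1 - Complex.I * (μ k : ℂ))⁻¹ := by
    rw [hD'def]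
    simp only [dotProduct, Matrix.mulVec_diagonal]
    exact Finset.sum_congr rfl fun k _ => by simp [cv]; ring
  have hsumG : ∑ k, c k ^ 2 / (2 * b k) = -(bc ⬝ᵥ (G *ᵥ bc)) := by
    rw [← hdG, hd1, ← Finset.sum_neg_distrib]
    refine Finset.sum_congr rfl fun k _ => ?_
    rw [hcdef, hbdef]
    have hf := hfac0 k
    field_simp
    linear_combination ((wR k : ℂ)) ^ 2 * Complex.I_sq
  have hE1 : (e1 : ℂ) = mc ⬝ᵥ (Ac *ᵥ mc) := by
    rw [he1def, cast_dot, cast_mulVec, hcvm, ← hAcdef]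
  have hE2 : (e2 : ℂ) = lamc ⬝ᵥ mc := by rw [he2def, cast_dot, hcvm, hcvlam]
  have hp1' : mc ⬝ᵥ ((Ac * B⁻¹) *ᵥ mc)
      = mc ⬝ᵥ (Ac *ᵥ mc) + Complex.I * (mc ⬝ᵥ ((Ac * (G * Ac)) *ᵥ mc)) := by
    rw [hNfact, Matrix.mul_add, Matrix.mul_one, Matrix.mul_smul, Matrix.add_mulVec,
      Matrix.smul_mulVec, dotProduct_add, dotProduct_smul, smul_eq_mul]
  have hp2' : lamc ⬝ᵥ (B⁻¹ *ᵥ mc)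
      = lamc ⬝ᵥ mc + Complex.I * (lamc ⬝ᵥ ((G * Ac) *ᵥ mc)) := by
    rw [hNfact, Matrix.add_mulVec, Matrix.one_mulVec, Matrix.smul_mulVec,
      dotProduct_add, dotProduct_smul, smul_eq_mul]
  have hp3 : lamc ⬝ᵥ ((B⁻¹ * Sc) *ᵥ lamc) = lamc ⬝ᵥ (G *ᵥ lamc) := by rw [hG]
  have hq : bc ⬝ᵥ (G *ᵥ bc)
      = mc ⬝ᵥ ((Ac * (G * Ac)) *ᵥ mc) + 2 * (lamc ⬝ᵥ ((G * Ac) *ᵥ mc))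
        + lamc ⬝ᵥ (G *ᵥ lamc) := by
    rw [hbcdef, Matrix.mulVec_add, add_dotProduct, dotProduct_add,
      dotProduct_add]
    have hq1 : (Ac *ᵥ mc) ⬝ᵥ (G *ᵥ (Ac *ᵥ mc)) = mc ⬝ᵥ ((Ac * (G * Ac)) *ᵥ mc) := by
      rw [mulVec_dot_mulVec, hAct, Matrix.mul_assoc]
    have hq2 : (Ac *ᵥ mc) ⬝ᵥ (G *ᵥ lamc) = lamc ⬝ᵥ ((G * Ac) *ᵥ mc) := by
      rw [dot_mulVec_comm, hGsymm, Matrix.mulVec_mulVec]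
    have hq3 : lamc ⬝ᵥ (G *ᵥ (Ac *ᵥ mc)) = lamc ⬝ᵥ ((G * Ac) *ᵥ mc) := by
      rw [Matrix.mulVec_mulVec]
    rw [hq1, hq2, hq3]
    ring
  rw [hmain, hsumG]
  apply congrArg
  rw [hp1', hp2', hp3, hq, hKdef, hE1, hE2]
  linear_combination (-(mc ⬝ᵥ ((Ac * (G * Ac)) *ᵥ mc))
    - 2 * (lamc ⬝ᵥ ((G * Ac) *ᵥ mc))) * Complex.I_sq

end
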